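/- Let M ∈ M₃(ℝ) be nilpotent (M³ = 0) and A₀ ∈ SL(3,ℝ). Then A(t) = (I + tM)A₀ satisfies det A(t) = 1 for all t ∈ ℝ, A''(t) = 0, and tr((A'(t)A(t)⁻¹)²) = 0; hence A(t) is a global solution of the incompressible affine equation A'' = Λ(A,A')A⁻ᵀ with Λ(A,A') = tr((A'A⁻¹)²)/tr(A⁻ᵀA⁻¹), and the corresponding 'pressure coefficient' Λ vanishes identically. -/

import Mathlib

open Matrix Filter Topology
noncomputable section
attribute [local instance] Matrix.normedAddCommGroup Matrix.normedSpace

abbrev M3 := Matrix (Fin 3) (Fin 3) ℝ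

/-- The coefficient Λ(A,A') = tr((A'A⁻¹)²)/tr(A⁻ᵀA⁻¹) for incompressible affine motion. -/
def Lam (A A' : M3) : ℝ :=
  Matrix.trace ((A' * A⁻¹) * (A' * A⁻¹)) / Matrix.trace ((A⁻¹)ᵀ * A⁻¹)

open Polynomial in
lemma aux_det_one_sub_smul (x : ℝ) (M : M3) :
    (1 - x • M).det = eval x (charpolyRev M) := by
  have hmap : ((1 : Matrix (Fin 3) (Fin 3) ℝ[X]) - (X : ℝ[X]) • M.map C).map (eval x)
      = 1 - x • M := by
    ext i j
    simp only [Matrix.map_apply, Matrix.sub_apply, Matrix.smul_apply, Matrix.one_apply,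
      smul_eq_mul, eval_sub, eval_mul, eval_X, eval_C, eval_one, eval_zero, apply_ite (eval x)]
  rw [charpolyRev, ← coe_evalRingHom, RingHom.map_det, RingHom.mapMatrix_apply, coe_evalRingHom,
    hmap]

open Polynomial in
lemma aux_charpolyRev_eq_one (M : M3) (hM : M ^ 3 = 0) : charpolyRev M = 1 := by
  obtain ⟨r, -, hr⟩ := Polynomial.isUnit_iff.mp
    (Matrix.isUnit_charpolyRev_of_isNilpotent ⟨3, hM⟩)
  have h := Matrix.eval_charpolyRev (M := M)
  rw [← hr, eval_C] at h
  rw [← hr, h, Polynomial.C_1]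

/-- shear flows A(t) = (I + tM)A₀ with M nilpotent give global
solutions of incompressible affine motion with vanishing pressure coefficient Λ. -/
theorem stmt18 (M A₀ : M3) (hM : M ^ 3 = 0) (hA₀ : A₀.det = 1) :
    ∀ t : ℝ,
      ((1 + t • M) * A₀).det = 1 ∧
      deriv (deriv (fun s : ℝ => (1 + s • M) * A₀)) t = 0 ∧
      Matrix.trace ((deriv (fun s : ℝ => (1 + s • M) * A₀) t * ((1 + t • M) * A₀)⁻¹) *
        (deriv (fun s : ℝ => (1 + s • M) * A₀) t * ((1 + t • M) * A₀)⁻¹)) = 0 ∧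
      Lam ((1 + t • M) * A₀) (deriv (fun s : ℝ => (1 + s • M) * A₀) t) = 0 ∧
      deriv (deriv (fun s : ℝ => (1 + s • M) * A₀)) t
        = Lam ((1 + t • M) * A₀) (deriv (fun s : ℝ => (1 + s • M) * A₀) t) •
            (((1 + t • M) * A₀)⁻¹)ᵀ := by
  intro t
  have hM3 : M * M * M = 0 := by
    have : M ^ 3 = M * M * M := by rw [pow_succ, pow_two]
    rw [← this, hM]
  have hM3' : M * (M * M) = 0 := by rw [← Matrix.mul_assoc, hM3]
  -- determinant of 1 + t • M
  have hdetB : (1 + t • M).det = 1 := by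
    have : (1 : M3) + t • M = 1 - (-t) • M := by rw [neg_smul, sub_neg_eq_add]
    rw [this, aux_det_one_sub_smul, aux_charpolyRev_eq_one M hM, Polynomial.eval_one]
  -- the derivative of the curve
  have hcurve : (fun s : ℝ => (1 + s • M) * A₀) = fun s : ℝ => A₀ + s • (M * A₀) := by
    funext s
    rw [Matrix.add_mul, Matrix.one_mul, Matrix.smul_mul]
  have hd : ∀ s : ℝ, HasDerivAt (fun u : ℝ => (1 + u • M) * A₀) (M * A₀) s := by
    intro s
    rw [hcurve]
    have h := ((hasDerivAt_id' s).smul_const (M * A₀)).const_add A₀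
    rwa [one_smul] at h
  have hderiv : deriv (fun s : ℝ => (1 + s • M) * A₀) = fun _ => M * A₀ := by
    funext s; exact (hd s).deriv
  have hderiv2 : deriv (deriv (fun s : ℝ => (1 + s • M) * A₀)) t = 0 := by
    rw [hderiv]; exact deriv_const _ _
  -- explicit inverse of 1 + t • M
  set C : M3 := 1 - t • M + (t * t) • (M * M) with hC
  have hBC : (1 + t • M) * C = 1 := by
    simp only [hC, Matrix.add_mul, Matrix.one_mul, Matrix.smul_mul, Matrix.mul_add,
      Matrix.mul_sub, Matrix.mul_one, Matrix.mul_smul, smul_smul, hM3', smul_zero,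
      smul_sub, smul_add, add_zero]
    abel
  have hBinv : (1 + t • M)⁻¹ = C := inv_eq_right_inv hBC
  have hA₀inv : A₀ * A₀⁻¹ = 1 := Matrix.mul_nonsing_inv _ (by rw [hA₀]; exact isUnit_one)
  -- the key product
  have h1 : M * A₀ * ((1 + t • M) * A₀)⁻¹ = M - t • (M * M) := by
    rw [Matrix.mul_inv_rev, hBinv, Matrix.mul_assoc, ← Matrix.mul_assoc A₀, hA₀inv,
      Matrix.one_mul, hC, Matrix.mul_add, Matrix.mul_sub, Matrix.mul_one, Matrix.mul_smul,
      Matrix.mul_smul, hM3', smul_zero, add_zero]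
  have h2 : (M - t • (M * M)) * (M - t • (M * M)) = M * M := by
    simp only [Matrix.sub_mul, Matrix.mul_sub, Matrix.smul_mul, Matrix.mul_smul, smul_smul,
      Matrix.mul_assoc, hM3', smul_zero, sub_zero, mul_zero, Matrix.mul_zero]
  have htrM2 : Matrix.trace (M * M) = 0 := by
    have hnil : IsNilpotent (M * M) := ⟨2, by simp [pow_two, Matrix.mul_assoc, hM3']⟩
    exact (Matrix.isNilpotent_trace_of_isNilpotent hnil).eq_zero
  have htr : Matrix.trace ((deriv (fun s : ℝ => (1 + s • M) * A₀) t * ((1 + t • M) * A₀)⁻¹) *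
      (deriv (fun s : ℝ => (1 + s • M) * A₀) t * ((1 + t • M) * A₀)⁻¹)) = 0 := by
    rw [hderiv, h1, h2, htrM2]
  have hLam : Lam ((1 + t • M) * A₀) (deriv (fun s : ℝ => (1 + s • M) * A₀) t) = 0 := by
    unfold Lam
    rw [htr, zero_div]
  refine ⟨?_, hderiv2, htr, hLam, ?_⟩
  · rw [Matrix.det_mul, hdetB, hA₀, one_mul]
  · rw [hLam, zero_smul, hderiv2]
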